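/- Let $(d_r)_{r\ge1}$ be integers $\ge 2$ and $(p_r)_{r\ge1}$ probabilities in $(0,1]$ with $\lim_{r\to\infty} p_r = 1$, and let $f_r(z) = ((z-(1-p_r))/p_r)^{d_r}$, $\tilde f_r = f_r\circ\cdots\circ f_1$. Suppose $\lambda \in \mathbb{C}$ satisfies: $(\tilde f_r(\lambda))_r$ is bounded, and $|\tilde f_r(\lambda)| < \rho_0$ for infinitely many $r$, for some $\rho_0 \in (0,1)$. Then $\lim_{r\to\infty} \tilde f_r(\lambda) = 0$. -/

import Mathlib

/-- The polynomial `f_r(z) = ((z - (1 - p_r))/p_r)^(d_r)`. -/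
noncomputable def fr (d : ℕ → ℕ) (p : ℕ → ℝ) (r : ℕ) (z : ℂ) : ℂ :=
  ((z - (1 - (p r : ℂ))) / (p r : ℂ)) ^ (d r)

/-- The composition `f̃_r = f_r ∘ ⋯ ∘ f_1`, with `f̃_0 = id`. -/
noncomputable def ftil (d : ℕ → ℕ) (p : ℕ → ℝ) : ℕ → ℂ → ℂ
  | 0 => fun z => z
  | r + 1 => fun z => fr d p (r + 1) (ftil d p r z)

lemma key_real (ρ ε t q : ℝ) (hρ0 : 0 < ρ) (hρ1 : ρ < 1) (hε0 : 0 < ε) (hερ : ε ≤ ρ)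
    (ht0 : 0 ≤ t) (htρ : t ≤ ρ) (hq1 : q ≤ 1)
    (hq : 1 - min (ε/4) ((1-ρ)*ε/32) ≤ q) :
    (t + (1 - q)) / q ≤ (1+ρ)/2 ∧ ((t + (1 - q)) / q)^2 ≤ max ε ((3+ρ)/4 * t) := by
  have hδ1 : min (ε/4) ((1-ρ)*ε/32) ≤ ε/4 := min_le_left _ _
  have hδ2 : min (ε/4) ((1-ρ)*ε/32) ≤ (1-ρ)*ε/32 := min_le_right _ _
  set δ := 1 - q with hδdef
  have hδle1 : δ ≤ ε/4 := by simp only [hδdef]; linarith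
  have hδle2 : δ ≤ (1-ρ)*ε/32 := by simp only [hδdef]; linarith
  have hδ0 : 0 ≤ δ := by simp only [hδdef]; linarith
  have hq0 : (0:ℝ) < q := by nlinarith
  have hB0 : 0 ≤ (t + δ) / q := div_nonneg (by linarith) hq0.le
  have h1 : (t + δ) / q ≤ (1+ρ)/2 := by
    rw [div_le_iff₀ hq0]
    nlinarith
  refine ⟨h1, ?_⟩
  rcases le_or_gt t (ε/2) with h | h
  · refine le_trans ?_ (le_max_left _ _)
    have hBε : (t + δ) / q ≤ ε := by
      rw [div_le_iff₀ hq0]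
      nlinarith
    have hB1 : (t + δ) / q ≤ 1 := by nlinarith
    nlinarith
  · refine le_trans ?_ (le_max_right _ _)
    have hδρ : δ ≤ (1-ρ)/32 := by nlinarith
    have hcq : (1-ρ)/8 ≤ (3+ρ)/4 * q - (1+ρ)/2 := by nlinarith
    have h4 : (1-ρ)/8 * t ≤ ((3+ρ)/4 * q - (1+ρ)/2) * t :=
      mul_le_mul_of_nonneg_right hcq ht0
    have h2 : (t + δ) / q ≤ (3+ρ)/4 * t / ((1+ρ)/2) := by
      rw [div_le_div_iff₀ hq0 (by linarith)]
      nlinarith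
    calc ((t + δ) / q)^2 ≤ ((1+ρ)/2) * ((t + δ)/q) := by nlinarith
      _ ≤ ((1+ρ)/2) * ((3+ρ)/4 * t / ((1+ρ)/2)) := by
          apply mul_le_mul_of_nonneg_left h2 (by linarith)
      _ = (3+ρ)/4 * t := by field_simp


lemma abs_fr_le (d : ℕ → ℕ) (p : ℕ → ℝ) (r : ℕ) (z : ℂ)
    (hp0 : 0 < p r) (hp1 : p r ≤ 1) (hd : 2 ≤ d r)
    (hB : (‖z‖ + (1 - p r)) / p r ≤ 1) :
    ‖fr d p r z‖ ≤ ((‖z‖ + (1 - p r)) / p r) ^ 2 := by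
  have hB0 : 0 ≤ (‖z‖ + (1 - p r)) / p r :=
    div_nonneg (by have := norm_nonneg z; linarith) hp0.le
  have hb : ‖(z - (1 - (p r : ℂ))) / (p r : ℂ)‖
      ≤ (‖z‖ + (1 - p r)) / p r := by
    rw [norm_div]
    have h1 : ‖((p r : ℂ))‖ = p r := by
      rw [Complex.norm_real, Real.norm_eq_abs, abs_of_pos hp0]
    rw [h1]
    have h2 : ‖z - (1 - (p r : ℂ))‖ ≤ ‖z‖ + (1 - p r) := by
      have h3 : (1 : ℂ) - (p r : ℂ) = ((1 - p r : ℝ) : ℂ) := by push_cast; ring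
      calc ‖z - (1 - (p r : ℂ))‖
          ≤ ‖z‖ + ‖(1 - (p r : ℂ))‖ := by
            exact norm_sub_le z (1 - (p r : ℂ))
        _ = ‖z‖ + (1 - p r) := by
            rw [h3, Complex.norm_real, Real.norm_eq_abs, abs_of_nonneg (by linarith)]
    gcongr
  unfold fr
  rw [norm_pow]
  calc ‖(z - (1 - (p r : ℂ))) / (p r : ℂ)‖ ^ d r
      ≤ ((‖z‖ + (1 - p r)) / p r) ^ d r :=
        pow_le_pow_left₀ (norm_nonneg _) hb _
    _ ≤ ((‖z‖ + (1 - p r)) / p r) ^ 2 :=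
        pow_le_pow_of_le_one hB0 hB hd

/-- Zero–one dichotomy: if `p_r → 1`, the orbit `(f̃_r(λ))` is bounded, and `|f̃_r(λ)| < ρ₀`
for infinitely many `r` with `ρ₀ < 1`, then `f̃_r(λ) → 0`. -/
theorem stmt14 (d : ℕ → ℕ) (p : ℕ → ℝ)
    (hd : ∀ r, 1 ≤ r → 2 ≤ d r) (hp : ∀ r, 1 ≤ r → 0 < p r ∧ p r ≤ 1)
    (hp1 : Filter.Tendsto p Filter.atTop (nhds 1))
    (lam : ℂ)
    (hbdd : ∃ M : ℝ, ∀ r : ℕ, ‖ftil d p r lam‖ ≤ M)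
    (ρ : ℝ) (hρ0 : 0 < ρ) (hρ1 : ρ < 1)
    (hinf : ∀ N : ℕ, ∃ r, N ≤ r ∧ ‖ftil d p r lam‖ < ρ) :
    Filter.Tendsto (fun r => ftil d p r lam) Filter.atTop (nhds 0) := by
  rw [NormedAddCommGroup.tendsto_nhds_zero]
  intro ε hε
  set ε' := min (ε/2) ρ with hε'def
  have hε'0 : 0 < ε' := lt_min (by linarith) hρ0
  have hε'ρ : ε' ≤ ρ := min_le_right _ _
  have hε'ε : ε' < ε := lt_of_le_of_lt (min_le_left _ _) (by linarith)
  set δ₀ := min (ε'/4) ((1-ρ)*ε'/32) with hδ₀def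
  have hδ₀0 : 0 < δ₀ := by
    have h : (0:ℝ) < (1-ρ)*ε' := by nlinarith
    exact lt_min (by linarith) (by linarith)
  -- threshold on p
  obtain ⟨N, hN⟩ := Metric.tendsto_atTop.mp hp1 δ₀ hδ₀0
  have hNp : ∀ r, N ≤ r → 1 - δ₀ ≤ p r := by
    intro r hr
    have := hN r hr
    rw [Real.dist_eq] at this
    have := abs_lt.mp this
    linarith [this.1]
  -- starting point
  obtain ⟨R, hRN, hRρ⟩ := hinf (N + 1)
  set c := (3+ρ)/4 with hcdef
  have hc0 : 0 < c := by rw [hcdef]; linarith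
  have hc1 : c < 1 := by rw [hcdef]; linarith
  -- the trap and contraction, by induction
  have main : ∀ k : ℕ, ‖ftil d p (R + k) lam‖ ≤ max ε' (c ^ k * ρ) := by
    intro k
    induction k with
    | zero =>
      simpa using le_max_of_le_right (by simpa using hRρ.le)
    | succ k ih =>
      set a := ‖ftil d p (R + k) lam‖ with hadef
      have ha0 : 0 ≤ a := norm_nonneg _
      have hckρ : c ^ k * ρ ≤ ρ := by
        have : c ^ k ≤ 1 := pow_le_one₀ hc0.le hc1.le
        nlinarith
      have haρ : a ≤ ρ := le_trans ih (max_le (by linarith) hckρ)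
      have hr1 : 1 ≤ R + k + 1 := by omega
      have hrN : N ≤ R + k + 1 := by omega
      obtain ⟨hq0, hq1⟩ := hp (R + k + 1) hr1
      have hqδ : 1 - δ₀ ≤ p (R + k + 1) := hNp _ hrN
      obtain ⟨hkey1, hkey2⟩ := key_real ρ ε' a (p (R + k + 1)) hρ0 hρ1 hε'0 hε'ρ ha0 haρ hq1 hqδ
      have hB1 : (a + (1 - p (R + k + 1))) / p (R + k + 1) ≤ 1 := le_trans hkey1 (by linarith)
      have hstep : ‖ftil d p (R + (k+1)) lam‖
          ≤ ((a + (1 - p (R + k + 1))) / p (R + k + 1)) ^ 2 := by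
        have : R + (k + 1) = (R + k) + 1 := by omega
        rw [this]
        show ‖fr d p (R + k + 1) (ftil d p (R + k) lam)‖ ≤ _
        exact abs_fr_le d p (R + k + 1) _ hq0 hq1 (hd _ hr1) hB1
      refine le_trans hstep (le_trans hkey2 ?_)
      apply max_le (le_max_left _ _)
      -- c * a ≤ max ε' (c^(k+1) * ρ)
      rcases le_total ε' (c ^ k * ρ) with hm | hm
      · have hale : a ≤ c ^ k * ρ := le_trans ih (by rw [max_eq_right hm])
        refine le_trans ?_ (le_max_right _ _)
        calc c * a ≤ c * (c ^ k * ρ) := mul_le_mul_of_nonneg_left hale hc0.le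
          _ = c ^ (k+1) * ρ := by ring
      · have hale : a ≤ ε' := le_trans ih (by rw [max_eq_left hm])
        refine le_trans ?_ (le_max_left _ _)
        nlinarith
  -- choose k₀ with c^k₀ * ρ < ε'
  obtain ⟨k₀, hk₀⟩ := exists_pow_lt_of_lt_one (div_pos hε'0 hρ0) hc1
  have hk₀' : c ^ k₀ * ρ < ε' := by
    rw [lt_div_iff₀ hρ0] at hk₀
    exact hk₀
  rw [Filter.eventually_atTop]
  refine ⟨R + k₀, fun r hr => ?_⟩
  obtain ⟨k, rfl⟩ : ∃ k, r = R + k := ⟨r - R, by omega⟩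
  have hkk₀ : k₀ ≤ k := by omega
  have hck : c ^ k ≤ c ^ k₀ := pow_le_pow_of_le_one hc0.le hc1.le hkk₀
  have : ‖ftil d p (R + k) lam‖ ≤ ε' := by
    refine le_trans (main k) (max_le le_rfl ?_)
    nlinarith
  calc ‖ftil d p (R + k) lam‖ = ‖ftil d p (R + k) lam‖ := rfl
    _ ≤ ε' := this
    _ < ε := hε'ε
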